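/- Consider the two-color Pólya urn process (w₁[n], w₂[n])_{n≥0} with deterministic initial values w₁[0], w₂[0] > 0 and fixed rewards Δ₁ ≥ Δ₂ > 0, where at each step n+1, conditionally on the past, with probability w₁[n]/(w₁[n]+w₂[n]) one sets w₁[n+1] = w₁[n]+Δ₁ and w₂[n+1] = w₂[n], and otherwise sets w₂[n+1] = w₂[n]+Δ₂ and w₁[n+1] = w₁[n]. Then the process Z_n = w₂[n]/(w₁[n]+w₂[n]) is a supermartingale with respect to the natural filtration: E[Z_{n+1} | F_n] ≤ Z_n for all n. -/

import Mathlib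

open MeasureTheory Filter

lemma polya_key (x y d1 d2 : ℝ) (hx : 0 < x) (hy : 0 < y) (hd2 : 0 < d2) (hd : d2 ≤ d1) :
    y / (x + y + d1) * (x / (x + y)) +
      ((y + d2) / (x + y + d2) - (y + d2) / (x + y + d2) * (x / (x + y))) ≤ y / (x + y) := by
  have hs : 0 < x + y := by linarith
  have h1 : 0 < x + y + d1 := by linarith
  have h2 : 0 < x + y + d2 := by linarith
  have e1 : (y + d2) / (x + y + d2) - (y + d2) / (x + y + d2) * (x / (x + y))
      = (y + d2) / (x + y + d2) * (y / (x + y)) := by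
    field_simp; ring
  rw [e1]
  have h3 : y / (x + y + d1) ≤ y / (x + y + d2) := by gcongr
  have h4 : y / (x + y + d1) * (x / (x + y)) ≤ y / (x + y + d2) * (x / (x + y)) :=
    mul_le_mul_of_nonneg_right h3 (by positivity)
  have e2 : y / (x + y + d2) * (x / (x + y)) + (y + d2) / (x + y + d2) * (y / (x + y))
      = y / (x + y) := by
    field_simp; ring
  linarith

/-- Two-color Pólya urn with rewards `Δ₁ ≥ Δ₂ > 0`: the normalized weight
`Z_n = w₂[n]/(w₁[n]+w₂[n])` of the second color is a supermartingale. -/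
theorem polya_urn_supermartingale
    {Ω : Type*} {m0 : MeasurableSpace Ω} {μ : Measure Ω} [IsProbabilityMeasure μ]
    (ℱ : Filtration ℕ m0)
    (w₁ w₂ : ℕ → Ω → ℝ) (ξ : ℕ → Ω → Bool)
    (a₁ a₂ Δ₁ Δ₂ : ℝ)
    (ha₁ : 0 < a₁) (ha₂ : 0 < a₂) (hΔ₂ : 0 < Δ₂) (hΔ : Δ₂ ≤ Δ₁)
    (hw₁0 : ∀ ω, w₁ 0 ω = a₁) (hw₂0 : ∀ ω, w₂ 0 ω = a₂)
    (hξ : ∀ n, Measurable[ℱ (n + 1)] (ξ n))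
    (hsel : ∀ n, μ[(fun ω => if ξ n ω then (1 : ℝ) else 0) | ℱ n]
        =ᵐ[μ] fun ω => w₁ n ω / (w₁ n ω + w₂ n ω))
    (hrec₁ : ∀ n ω, w₁ (n + 1) ω = if ξ n ω then w₁ n ω + Δ₁ else w₁ n ω)
    (hrec₂ : ∀ n ω, w₂ (n + 1) ω = if ξ n ω then w₂ n ω else w₂ n ω + Δ₂) :
    Supermartingale (fun n ω => w₂ n ω / (w₁ n ω + w₂ n ω)) ℱ μ := by
  have hΔ₁ : 0 < Δ₁ := lt_of_lt_of_le hΔ₂ hΔ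
  -- lower bounds
  have hb : ∀ n ω, a₁ ≤ w₁ n ω ∧ a₂ ≤ w₂ n ω := by
    intro n
    induction n with
    | zero => intro ω; rw [hw₁0, hw₂0]; exact ⟨le_refl _, le_refl _⟩
    | succ n ih =>
      intro ω
      rw [hrec₁, hrec₂]
      rcases ih ω with ⟨h1, h2⟩
      by_cases h : ξ n ω <;> simp [h] <;> constructor <;> linarith
  have hpos₁ : ∀ n ω, 0 < w₁ n ω := fun n ω => lt_of_lt_of_le ha₁ (hb n ω).1
  have hpos₂ : ∀ n ω, 0 < w₂ n ω := fun n ω => lt_of_lt_of_le ha₂ (hb n ω).2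
  have hS : ∀ n ω, 0 < w₁ n ω + w₂ n ω := fun n ω => by
    have := hpos₁ n ω; have := hpos₂ n ω; linarith
  -- measurability
  have hmeas : ∀ n, Measurable[ℱ n] (w₁ n) ∧ Measurable[ℱ n] (w₂ n) := by
    intro n
    induction n with
    | zero =>
      constructor
      · have : w₁ 0 = fun _ => a₁ := funext hw₁0
        rw [this]; exact measurable_const
      · have : w₂ 0 = fun _ => a₂ := funext hw₂0
        rw [this]; exact measurable_const
    | succ n ih =>
      have hset : MeasurableSet[ℱ (n + 1)] {ω | ξ n ω = true} :=
        (hξ n) (measurableSet_singleton true)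
      have h1 : Measurable[ℱ (n + 1)] (w₁ n) := ih.1.mono (ℱ.mono (Nat.le_succ n)) le_rfl
      have h2 : Measurable[ℱ (n + 1)] (w₂ n) := ih.2.mono (ℱ.mono (Nat.le_succ n)) le_rfl
      constructor
      · have : w₁ (n + 1) = fun ω => if ξ n ω then w₁ n ω + Δ₁ else w₁ n ω := funext (hrec₁ n)
        rw [this]
        exact Measurable.ite hset (h1.add_const _) h1
      · have : w₂ (n + 1) = fun ω => if ξ n ω then w₂ n ω else w₂ n ω + Δ₂ := funext (hrec₂ n)
        rw [this]
        exact Measurable.ite hset h2 (h2.add_const _)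
  have hZmeas : ∀ n, Measurable[ℱ n] (fun ω => w₂ n ω / (w₁ n ω + w₂ n ω)) := fun n =>
    (hmeas n).2.div ((hmeas n).1.add (hmeas n).2)
  -- integrability of bounded ℱ-measurable functions
  have hint : ∀ (n : ℕ) (f : Ω → ℝ), Measurable[ℱ n] f → (∀ ω, |f ω| ≤ 1) →
      Integrable f μ := by
    intro n f hf hbd
    refine ⟨(hf.mono (ℱ.le n) le_rfl).aestronglyMeasurable, ?_⟩
    exact HasFiniteIntegral.of_bounded (C := 1) (Eventually.of_forall fun ω => hbd ω)
  have hZbd : ∀ n ω, |w₂ n ω / (w₁ n ω + w₂ n ω)| ≤ 1 := by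
    intro n ω
    rw [abs_of_nonneg (div_nonneg (hpos₂ n ω).le (hS n ω).le)]
    rw [div_le_one (hS n ω)]
    have := hpos₁ n ω; linarith
  have hZint : ∀ n, Integrable (fun ω => w₂ n ω / (w₁ n ω + w₂ n ω)) μ := fun n =>
    hint n _ (hZmeas n) (hZbd n)
  refine supermartingale_nat (fun n => (hZmeas n).stronglyMeasurable) hZint ?_
  intro n
  -- notation for step n
  set χ : Ω → ℝ := fun ω => if ξ n ω then (1 : ℝ) else 0 with hχ
  set A : Ω → ℝ := fun ω => w₂ n ω / (w₁ n ω + w₂ n ω + Δ₁) with hA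
  set B : Ω → ℝ := fun ω => (w₂ n ω + Δ₂) / (w₁ n ω + w₂ n ω + Δ₂) with hB
  have hSd₁ : ∀ ω, 0 < w₁ n ω + w₂ n ω + Δ₁ := fun ω => by have := hS n ω; linarith
  have hSd₂ : ∀ ω, 0 < w₁ n ω + w₂ n ω + Δ₂ := fun ω => by have := hS n ω; linarith
  have hAmeas : Measurable[ℱ n] A :=
    (hmeas n).2.div (((hmeas n).1.add (hmeas n).2).add_const _)
  have hBmeas : Measurable[ℱ n] B :=
    ((hmeas n).2.add_const _).div (((hmeas n).1.add (hmeas n).2).add_const _)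
  have hAbd : ∀ ω, |A ω| ≤ 1 := by
    intro ω
    rw [hA, abs_of_nonneg (by have := hpos₂ n ω; have := hSd₁ ω; positivity)]
    rw [div_le_one (hSd₁ ω)]
    have := hpos₁ n ω; linarith
  have hBbd : ∀ ω, |B ω| ≤ 1 := by
    intro ω
    rw [hB, abs_of_nonneg (by have := hpos₂ n ω; have := hSd₂ ω; positivity)]
    rw [div_le_one (hSd₂ ω)]
    have := hpos₁ n ω; linarith
  have hχbd : ∀ ω, |χ ω| ≤ 1 := by
    intro ω; rw [hχ]; by_cases h : ξ n ω <;> simp [h]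
  have hχmeas : Measurable[ℱ (n + 1)] χ := by
    have hset : MeasurableSet[ℱ (n + 1)] {ω | ξ n ω = true} :=
      (hξ n) (measurableSet_singleton true)
    exact Measurable.ite hset measurable_const measurable_const
  have hχint : Integrable χ μ :=
    hint (n + 1) χ hχmeas hχbd
  have hAχint : Integrable (A * χ) μ := by
    refine hint (n + 1) _ ((hAmeas.mono (ℱ.mono (Nat.le_succ n)) le_rfl).mul hχmeas) ?_
    intro ω
    calc |A ω * χ ω| = |A ω| * |χ ω| := abs_mul _ _
    _ ≤ 1 * 1 := mul_le_mul (hAbd ω) (hχbd ω) (abs_nonneg _) zero_le_one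
    _ = 1 := mul_one 1
  have hBχint : Integrable (B * χ) μ := by
    refine hint (n + 1) _ ((hBmeas.mono (ℱ.mono (Nat.le_succ n)) le_rfl).mul hχmeas) ?_
    intro ω
    calc |B ω * χ ω| = |B ω| * |χ ω| := abs_mul _ _
    _ ≤ 1 * 1 := mul_le_mul (hBbd ω) (hχbd ω) (abs_nonneg _) zero_le_one
    _ = 1 := mul_one 1
  have hBint : Integrable B μ := hint n B hBmeas hBbd
  -- decompose Z (n+1)
  have hdec : (fun ω => w₂ (n + 1) ω / (w₁ (n + 1) ω + w₂ (n + 1) ω))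
      = (A * χ) + (B - B * χ) := by
    funext ω
    simp only [Pi.add_apply, Pi.sub_apply, Pi.mul_apply, hrec₁, hrec₂, hA, hB, hχ]
    by_cases h : ξ n ω <;> simp [h] <;> ring_nf
  rw [hdec]
  have step1 : μ[(A * χ) + (B - B * χ)|ℱ n]
      =ᵐ[μ] μ[A * χ|ℱ n] + μ[B - B * χ|ℱ n] :=
    condExp_add hAχint (hBint.sub hBχint) _
  have step2 : μ[B - B * χ|ℱ n] =ᵐ[μ] μ[B|ℱ n] - μ[B * χ|ℱ n] :=
    condExp_sub hBint hBχint _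
  have hBcond : μ[B|ℱ n] =ᵐ[μ] B := by
    rw [condExp_of_stronglyMeasurable (ℱ.le n) hBmeas.stronglyMeasurable hBint]
  have hAχ : μ[A * χ|ℱ n] =ᵐ[μ] A * μ[χ|ℱ n] :=
    condExp_mul_of_stronglyMeasurable_left hAmeas.stronglyMeasurable hAχint hχint
  have hBχ : μ[B * χ|ℱ n] =ᵐ[μ] B * μ[χ|ℱ n] :=
    condExp_mul_of_stronglyMeasurable_left hBmeas.stronglyMeasurable hBχint hχint
  have hχcond : μ[χ|ℱ n] =ᵐ[μ] fun ω => w₁ n ω / (w₁ n ω + w₂ n ω) := hsel n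
  filter_upwards [step1, step2, hBcond, hAχ, hBχ, hχcond] with ω h1 h2 h3 h4 h5 h6
  rw [h1, Pi.add_apply, h4, h2, Pi.sub_apply, h3, h5]
  simp only [Pi.mul_apply, h6, hA, hB]
  exact polya_key (w₁ n ω) (w₂ n ω) Δ₁ Δ₂ (hpos₁ n ω) (hpos₂ n ω) hΔ₂ hΔ
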